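/- If g : ℂ → Matrix (Fin N) (Fin N) ℂ is entire and satisfies g(qt) = ((q-1)t·Ξ(t) + I)g(t) with g(t0) = I for some t0, Ξ entire, and 0 < |q| < 1, then g(t) is invertible for every t ∈ ℂ. -/

import Mathlib

open Topology Filter

lemma det_diff_aux {N : ℕ} (M : ℂ → Matrix (Fin N) (Fin N) ℂ)
    (h : ∀ i j, Differentiable ℂ (fun t => M t i j)) :
    Differentiable ℂ (fun t => (M t).det) := by
  simp only [Matrix.det_apply, Units.smul_def, zsmul_eq_mul]
  apply Differentiable.fun_sum
  intro σ _
  exact (Differentiable.fun_finset_prod (fun i _ => h (σ i) i)).const_mul _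

theorem q_difference_solution_invertible
    (q : ℂ) (hq0 : 0 < ‖q‖) (hq1 : ‖q‖ < 1) (N : ℕ)
    (Ξ : ℂ → Matrix (Fin N) (Fin N) ℂ)
    (hΞ : ∀ i j, Differentiable ℂ (fun t => Ξ t i j))
    (g : ℂ → Matrix (Fin N) (Fin N) ℂ)
    (hg : ∀ i j, Differentiable ℂ (fun t => g t i j))
    (heq : ∀ t, g (q * t) = (((q - 1) * t) • Ξ t + 1) * g t)
    (t0 : ℂ) (ht0 : g t0 = 1) :
    ∀ t, IsUnit (g t) := by
  classical
  have hqne : q ≠ 0 := by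
    intro h; simp [h] at hq0
  set d : ℂ → ℂ := fun t => ((((q - 1) * t) • Ξ t + 1 : Matrix (Fin N) (Fin N) ℂ)).det with hdDef
  set f : ℂ → ℂ := fun t => (g t).det with hfDef
  have hfd : Differentiable ℂ f := det_diff_aux _ hg
  have hdd : Differentiable ℂ d := by
    apply det_diff_aux
    intro i j
    have : (fun t => (((q - 1) * t) • Ξ t + 1 : Matrix (Fin N) (Fin N) ℂ) i j)
        = fun t => ((q - 1) * t) * Ξ t i j + (1 : Matrix (Fin N) (Fin N) ℂ) i j := by
      funext t; simp [Matrix.add_apply, Matrix.smul_apply, smul_eq_mul]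
    rw [this]
    exact (((differentiable_const _).mul differentiable_id).mul (hΞ i j)).add
      (differentiable_const _)
  have hrel : ∀ t, f (q * t) = d t * f t := by
    intro t
    simp only [hfDef, hdDef, heq t, Matrix.det_mul]
  have hd0 : d 0 = 1 := by simp [hdDef]
  have hft0 : f t0 = 1 := by simp [hfDef, ht0]
  have hA : AnalyticAt ℂ f 0 := hfd.analyticAt 0
  have hfne : ∀ t, f t ≠ 0 := by
    rcases hA.eventually_eq_zero_or_eventually_ne_zero with h0 | h0
    · exfalso
      have hAll : AnalyticOnNhd ℂ f Set.univ := fun z _ => hfd.analyticAt z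
      have hzero : AnalyticOnNhd ℂ (fun _ : ℂ => (0 : ℂ)) Set.univ :=
        fun z _ => analyticAt_const
      have := hAll.eqOn_of_preconnected_of_eventuallyEq hzero
        isPreconnected_univ (Set.mem_univ (0 : ℂ)) h0
      have := this (Set.mem_univ t0)
      rw [hft0] at this
      exact one_ne_zero this
    · -- f is nonzero on a punctured neighborhood of 0
      have horder : analyticOrderAt f 0 ≠ ⊤ := by
        intro htop
        rw [analyticOrderAt_eq_top] at htop
        have hev : ∀ᶠ z in 𝓝[≠] (0 : ℂ), f z = 0 := htop.filter_mono nhdsWithin_le_nhds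
        obtain ⟨z, hz1, hz2⟩ := (h0.and hev).exists
        exact hz1 hz2
      obtain ⟨n, hn⟩ := ENat.ne_top_iff_exists.mp horder
      obtain ⟨G, hG, hG0, hfG⟩ := (hA.analyticOrderAt_eq_natCast (n := n)).mp hn.symm
      -- derive q ^ n = 1
      have hkey : q ^ n = 1 := by
        have hmap : Filter.Tendsto (fun z : ℂ => q * z) (𝓝 0) (𝓝 0) := by
          have : Filter.Tendsto (fun z : ℂ => q * z) (𝓝 0) (𝓝 (q * 0)) :=
            (continuous_const.mul continuous_id).tendsto 0
          simpa using this
        have h2 : ∀ᶠ z in 𝓝 (0 : ℂ), f (q * z) = (q * z - 0) ^ n • G (q * z) :=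
          hmap.eventually hfG
        have heq' : ∀ᶠ z in 𝓝[≠] (0 : ℂ), q ^ n * G (q * z) = d z * G z := by
          filter_upwards [hfG.filter_mono nhdsWithin_le_nhds,
            h2.filter_mono nhdsWithin_le_nhds, self_mem_nhdsWithin] with z hz1 hz2 hz0
          have hz0' : z ≠ 0 := hz0
          have hzn : z ^ n ≠ 0 := pow_ne_zero _ hz0'
          have hr := hrel z
          rw [hz1, hz2] at hr
          simp only [sub_zero, smul_eq_mul, mul_pow] at hr
          apply mul_left_cancel₀ hzn
          linear_combination hr
        have t1 : Filter.Tendsto (fun z : ℂ => q ^ n * G (q * z)) (𝓝[≠] 0)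
            (𝓝 (q ^ n * G 0)) := by
          apply Filter.Tendsto.mono_left _ nhdsWithin_le_nhds
          have : ContinuousAt (fun z : ℂ => q ^ n * G (q * z)) 0 := by
            apply ContinuousAt.mul continuousAt_const
            have h1 : ContinuousAt (fun z : ℂ => q * z) 0 :=
              (continuous_const.mul continuous_id).continuousAt
            have h2 : ContinuousAt G (q * 0) := by simpa using hG.continuousAt
            exact h2.comp h1
          simpa using this.tendsto
        have t2 : Filter.Tendsto (fun z : ℂ => d z * G z) (𝓝[≠] 0) (𝓝 (d 0 * G 0)) := by
          apply Filter.Tendsto.mono_left _ nhdsWithin_le_nhds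
          exact (hdd.continuous.continuousAt.mul hG.continuousAt).tendsto
        have := tendsto_nhds_unique (t1.congr' heq') t2
        rw [hd0, one_mul] at this
        exact mul_right_cancel₀ hG0 (this.trans (one_mul (G 0)).symm)
      have hn0 : n = 0 := by
        by_contra hne
        have h1 : ‖q ^ n‖ = 1 := by rw [hkey]; simp
        have h2 : ‖q ^ n‖ < 1 := by
          rw [norm_pow]
          exact pow_lt_one₀ (le_of_lt hq0) hq1 hne
        linarith
      have hf0 : f 0 ≠ 0 := by
        have h := hfG.self_of_nhds
        rw [hn0] at h
        simp only [sub_zero, pow_zero, one_smul] at h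
        rw [h]; exact hG0
      intro t ht
      rcases eq_or_ne t 0 with rfl | htne
      · exact hf0 ht
      · have hz : ∀ m : ℕ, f (q ^ m * t) = 0 := by
          intro m
          induction m with
          | zero => simpa using ht
          | succ k ih =>
            have : q ^ (k + 1) * t = q * (q ^ k * t) := by ring
            rw [this, hrel, ih, mul_zero]
        have htend : Filter.Tendsto (fun m : ℕ => q ^ m * t) Filter.atTop (𝓝[≠] 0) := by
          rw [tendsto_nhdsWithin_iff]
          constructor
          · have : Filter.Tendsto (fun m : ℕ => q ^ m) Filter.atTop (𝓝 0) := by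
              apply tendsto_pow_atTop_nhds_zero_of_norm_lt_one
              simpa using hq1
            simpa using this.mul_const t
          · exact Filter.Eventually.of_forall fun m =>
              mul_ne_zero (pow_ne_zero _ hqne) htne
        obtain ⟨m, hm⟩ := (htend.eventually h0).exists
        exact hm (hz m)
  intro t
  rw [Matrix.isUnit_iff_isUnit_det]
  exact isUnit_iff_ne_zero.mpr (hfne t)
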